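/- Let 0 < x₁ < x₂ < 1 and let F : [0,1]² → ℝ be continuous. Call a pair (h₁,h₂) admissible if h₁, h₂ : [0,1] → ℝ are continuously differentiable with h₁(0) = h₂(0) = 0, h₁(1) = x₁, h₂(1) = x₂ and 0 ≤ h₁'(y) ≤ h₂'(y) ≤ 1 for all y; for such a pair set G(h₁,h₂) = ∫₀¹ [ F(h₁(y),y) h₁'(y) + F(x₂ − h₂(y) + h₁(y), y)(h₂'(y) − h₁'(y)) + F(x₂ − h₂(y) + y, y)(1 − h₂'(y)) ] dy, and let μ(h₁,h₂) denote a doubly stochastic measure whose distribution function μ([0,x]×[0,y]) equals min(x,h₁(y)) for x ∈ [0,x₁], max(x + h₂(y) − x₂, h₁(y)) for x ∈ [x₁,x₂], and min(x − x₂ + h₂(y), y) for x ∈ [x₂,1]. If (h₁*,h₂*) is admissible and G(h₁*,h₂*) ≥ G(h₁,h₂) for every admissible pair (h₁,h₂), then ∫ F dμ(h₁*,h₂*) ≥ ∫ F dμ(h₁,h₂) for every admissible pair (h₁,h₂) (where the corresponding doubly stochastic measures are assumed to exist), and ∫ F dμ(h₁*,h₂*) = G(h₁*,h₂*). -/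

import Mathlib

open MeasureTheory Set

/-- A doubly stochastic measure on `[0,1]²`. -/
def IsDoublyStochastic (μ : Measure (ℝ × ℝ)) : Prop :=
  IsProbabilityMeasure μ ∧
  (∀ B : Set ℝ, MeasurableSet B → B ⊆ Icc 0 1 → μ (B ×ˢ Icc (0:ℝ) 1) = volume B) ∧
  (∀ B : Set ℝ, MeasurableSet B → B ⊆ Icc 0 1 → μ (Icc (0:ℝ) 1 ×ˢ B) = volume B)

/-- An admissible quadruple `(h₁, h₂)` together with its (continuous) derivatives
`(h₁', h₂')` on `[0,1]`. -/
def Admissible (x₁ x₂ : ℝ) (h₁ h₂ h₁' h₂' : ℝ → ℝ) : Prop :=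
  (∀ y ∈ Icc (0:ℝ) 1, HasDerivWithinAt h₁ (h₁' y) (Icc 0 1) y) ∧
  (∀ y ∈ Icc (0:ℝ) 1, HasDerivWithinAt h₂ (h₂' y) (Icc 0 1) y) ∧
  ContinuousOn h₁' (Icc (0:ℝ) 1) ∧ ContinuousOn h₂' (Icc (0:ℝ) 1) ∧
  h₁ 0 = 0 ∧ h₂ 0 = 0 ∧ h₁ 1 = x₁ ∧ h₂ 1 = x₂ ∧
  ∀ y ∈ Icc (0:ℝ) 1, 0 ≤ h₁' y ∧ h₁' y ≤ h₂' y ∧ h₂' y ≤ 1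

/-- The functional `G(h₁,h₂)` associated with `F` and the pair `(h₁,h₂)`. -/
noncomputable def Gfun (F : ℝ × ℝ → ℝ) (x₂ : ℝ) (h₁ h₂ h₁' h₂' : ℝ → ℝ) : ℝ :=
  ∫ y in (0:ℝ)..1,
    (F (h₁ y, y) * h₁' y +
     F (x₂ - h₂ y + h₁ y, y) * (h₂' y - h₁' y) +
     F (x₂ - h₂ y + y, y) * (1 - h₂' y))

/-- `μ` has the piecewise distribution function determined by `(h₁,h₂)`. -/
def HasPiecewiseDF (x₁ x₂ : ℝ) (h₁ h₂ : ℝ → ℝ) (μ : Measure (ℝ × ℝ)) : Prop :=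
  ∀ x ∈ Icc (0:ℝ) 1, ∀ y ∈ Icc (0:ℝ) 1,
    (x ∈ Icc 0 x₁ → (μ (Icc 0 x ×ˢ Icc 0 y)).toReal = min x (h₁ y)) ∧
    (x ∈ Icc x₁ x₂ → (μ (Icc 0 x ×ˢ Icc 0 y)).toReal = max (x + h₂ y - x₂) (h₁ y)) ∧
    (x ∈ Icc x₂ 1 → (μ (Icc 0 x ×ˢ Icc 0 y)).toReal = min (x - x₂ + h₂ y) y)

open Filter Topology
open scoped NNReal ENNReal

set_option linter.unusedVariables false
set_option linter.unusedSectionVars false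

lemma countable_of_forall_isolated {S : Set ℝ}
    (h : ∀ t ∈ S, ∀ᶠ u in 𝓝[≠] t, u ∉ S) : S.Countable := by
  rw [← Set.countable_coe_iff]
  have : DiscreteTopology S := by
    rw [discreteTopology_subtype_iff]
    intro x hx
    rw [inf_principal_eq_bot]
    exact h x hx
  exact countable_of_Lindelof_of_discrete

lemma abs_min_sub_min (a b x : ℝ) : |min a x - min b x| ≤ |a - b| := by
  have h1 := le_abs_self (a - b)
  have h2 := neg_abs_le (a - b)
  have h3 := abs_nonneg (a - b)
  rcases le_total a x with h | h <;> rcases le_total b x with h' | h' <;>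
    simp only [min_eq_left, min_eq_right, h, h'] <;>
    refine abs_le.mpr ⟨by linarith, by linarith⟩

section FTC

variable {c c' : ℝ → ℝ}
  (hc : ∀ t ∈ Icc (0:ℝ) 1, HasDerivWithinAt c (c' t) (Icc 0 1) t)
  (hc' : ContinuousOn c' (Icc (0:ℝ) 1))

include hc in
lemma hderivat : ∀ t ∈ Ioo (0:ℝ) 1, HasDerivAt c (c' t) t := fun t ht =>
  (hc t (Ioo_subset_Icc_self ht)).hasDerivAt (Icc_mem_nhds ht.1 ht.2)

include hc in
lemma ccont : ContinuousOn c (Icc (0:ℝ) 1) := fun t ht => (hc t ht).continuousWithinAt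

include hc in
lemma countable_level (x : ℝ) :
    {t | t ∈ Ioo (0:ℝ) 1 ∧ c t = x ∧ c' t ≠ 0}.Countable := by
  apply countable_of_forall_isolated
  rintro t ⟨ht, hcx, hne⟩
  have hd := hderivat hc t ht
  have hslope := hasDerivAt_iff_tendsto_slope.1 hd
  filter_upwards [hslope.eventually_ne hne, self_mem_nhdsWithin] with u hu hu'
  rintro ⟨-, hcu, -⟩
  apply hu
  simp [slope_def_field, hcu, hcx]

include hc hc' in
lemma ftc_min (x y : ℝ) (hy : y ∈ Icc (0:ℝ) 1) :
    ∫ t in (0:ℝ)..y, (if c t ≤ x then c' t else 0) = min (c y) x - min (c 0) x := by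
  have hccont := ccont hc
  have hIcc : Icc (0:ℝ) y ⊆ Icc 0 1 := Icc_subset_Icc le_rfl hy.2
  have hK : IsClosed (Icc (0:ℝ) 1 ∩ c ⁻¹' (Iic x)) :=
    hccont.preimage_isClosed_of_isClosed isClosed_Icc isClosed_Iic
  obtain ⟨M, hM⟩ := isCompact_Icc.exists_bound_of_continuousOn hc'
  have hint : IntervalIntegrable (fun t => if c t ≤ x then c' t else 0) volume 0 y := by
    rw [intervalIntegrable_iff_integrableOn_Ioc_of_le hy.1]
    have hsub : Ioc (0:ℝ) y ⊆ Icc 0 1 := Ioc_subset_Icc_self.trans hIcc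
    have hmeas : AEStronglyMeasurable (fun t => if c t ≤ x then c' t else 0)
        (volume.restrict (Ioc (0:ℝ) y)) := by
      have h1 : AEStronglyMeasurable c' (volume.restrict (Icc (0:ℝ) 1)) :=
        hc'.aestronglyMeasurable measurableSet_Icc
      have h3 : AEStronglyMeasurable ((Icc (0:ℝ) 1 ∩ c ⁻¹' (Iic x)).indicator c')
          (volume.restrict (Ioc (0:ℝ) y)) :=
        (h1.indicator hK.measurableSet).mono_measure (Measure.restrict_mono hsub le_rfl)
      apply h3.congr
      filter_upwards [ae_restrict_mem measurableSet_Ioc] with t ht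
      by_cases h : c t ≤ x
      · have hm : t ∈ Icc (0:ℝ) 1 ∩ c ⁻¹' (Iic x) := ⟨hsub ht, h⟩
        rw [Set.indicator_of_mem hm, if_pos h]
      · rw [Set.indicator_of_notMem (fun hm => h hm.2), if_neg h]
    apply Integrable.mono' (integrable_const (|M| : ℝ)) hmeas
    filter_upwards [ae_restrict_mem measurableSet_Ioc] with t ht
    by_cases h : c t ≤ x
    · simp only [h, if_true]
      exact (hM t (hsub ht)).trans (le_abs_self M)
    · simp only [h, if_false, norm_zero]
      exact abs_nonneg M
  have key := MeasureTheory.integral_eq_of_hasDerivAt_off_countable_of_le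
    (fun t => min (c t) x) (fun t => if c t ≤ x then c' t else 0) hy.1
    (countable_level hc x) ((hccont.mono hIcc).inf continuousOn_const) ?_ hint
  · exact key
  · rintro t ⟨htI, htS⟩
    show HasDerivAt (fun u => min (c u) x) (if c t ≤ x then c' t else 0) t
    have ht1 : t ∈ Ioo (0:ℝ) 1 := ⟨htI.1, lt_of_lt_of_le htI.2 hy.2⟩
    have hd := hderivat hc t ht1
    rcases lt_trichotomy (c t) x with hlt | heq | hgt
    · rw [if_pos hlt.le]
      have hev : (fun u => min (c u) x) =ᶠ[𝓝 t] c := by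
        filter_upwards [hd.continuousAt.eventually_lt_const hlt] with u hu
        exact min_eq_left hu.le
      exact hd.congr_of_eventuallyEq hev
    · have hc't : c' t = 0 := by
        by_contra hne; exact htS ⟨ht1, heq, hne⟩
      rw [if_pos heq.le, hc't]
      rw [hasDerivAt_iff_isLittleO]
      have hlo : (fun u => c u - c t) =o[𝓝 t] fun u => u - t := by
        have h2 := hd
        rw [hc't, hasDerivAt_iff_isLittleO] at h2
        simpa using h2
      refine (Asymptotics.isBigO_of_le _ fun u => ?_).trans_isLittleO hlo
      simp only [smul_zero, sub_zero, Real.norm_eq_abs]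
      exact abs_min_sub_min _ _ _
    · rw [if_neg (not_le.mpr hgt)]
      have hev : (fun u => min (c u) x) =ᶠ[𝓝 t] fun _ => x := by
        filter_upwards [hd.continuousAt.eventually_const_lt hgt] with u hu
        exact min_eq_right hu.le
      exact (hasDerivAt_const t x).congr_of_eventuallyEq hev

include hc hc' in
lemma ftc_plain (a b : ℝ) (ha : 0 ≤ a) (hab : a ≤ b) (hb : b ≤ 1) :
    ∫ t in a..b, c' t = c b - c a := by
  apply MeasureTheory.integral_eq_of_hasDerivAt_off_countable_of_le c c' hab
    Set.countable_empty ((ccont hc).mono (Icc_subset_Icc ha hb))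
  · rintro t ⟨htI, -⟩
    exact hderivat hc t ⟨lt_of_le_of_lt ha htI.1, lt_of_lt_of_le htI.2 hb⟩
  · exact (hc'.mono (by rw [uIcc_of_le hab]; exact Icc_subset_Icc ha hb)).intervalIntegrable

end FTC

section Piece

variable (c c' : ℝ → ℝ) (ε : ℝ)

/-- The measure of one "piece": pushforward of a weighted Lebesgue measure on `[0,1]`
under `t ↦ (c t, t)`. -/
noncomputable def pieceMeasure : Measure (ℝ × ℝ) :=
  Measure.map (fun t => (c t, t))
    ((volume.restrict (Icc (0:ℝ) 1)).withDensity (fun t => ENNReal.ofReal (ε * c' t)))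

variable {c c' ε}
variable (hc : ∀ t ∈ Icc (0:ℝ) 1, HasDerivWithinAt c (c' t) (Icc 0 1) t)
  (hc' : ContinuousOn c' (Icc (0:ℝ) 1))
  (hε : ∀ t ∈ Icc (0:ℝ) 1, 0 ≤ ε * c' t)
  (hc0 : ∀ t ∈ Icc (0:ℝ) 1, 0 ≤ c t)
  (hc1 : ∀ t ∈ Icc (0:ℝ) 1, c t ≤ 1)

include hc in
lemma piece_aemeasurable :
    AEMeasurable (fun t => (c t, t))
      ((volume.restrict (Icc (0:ℝ) 1)).withDensity (fun t => ENNReal.ofReal (ε * c' t))) :=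
  (((ccont hc).prodMk continuousOn_id).aemeasurable measurableSet_Icc).mono'
    (withDensity_absolutelyContinuous _ _)

include hc' hε in
lemma density_apply (A : Set ℝ) (hA : MeasurableSet A) (hAsub : A ⊆ Icc 0 1) :
    ((volume.restrict (Icc (0:ℝ) 1)).withDensity (fun t => ENNReal.ofReal (ε * c' t))) A
      = ENNReal.ofReal (∫ t in A, ε * c' t) := by
  rw [withDensity_apply _ hA, Measure.restrict_restrict hA,
    inter_eq_self_of_subset_left hAsub]
  have hint : IntegrableOn (fun t => ε * c' t) A volume :=
    ((continuousOn_const.mul hc').integrableOn_compact isCompact_Icc).mono_set hAsub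
  have hnn : 0 ≤ᵐ[volume.restrict A] fun t => ε * c' t :=
    (ae_restrict_iff' hA).2 (Filter.Eventually.of_forall fun t ht => hε t (hAsub ht))
  exact (MeasureTheory.ofReal_integral_eq_lintegral_ofReal hint hnn).symm

include hc hc' hε hc0 in
lemma piece_rect (x y : ℝ) (hx : 0 ≤ x) (hy : y ∈ Icc (0:ℝ) 1) :
    pieceMeasure c c' ε (Icc 0 x ×ˢ Icc 0 y)
      = ENNReal.ofReal (ε * (min (c y) x - min (c 0) x)) := by
  have hIcc : Icc (0:ℝ) y ⊆ Icc 0 1 := Icc_subset_Icc le_rfl hy.2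
  have hccont := ccont hc
  have hK : IsClosed (Icc (0:ℝ) 1 ∩ c ⁻¹' (Iic x)) :=
    hccont.preimage_isClosed_of_isClosed isClosed_Icc isClosed_Iic
  set A := Icc (0:ℝ) y ∩ (Icc (0:ℝ) 1 ∩ c ⁻¹' (Iic x)) with hAdef
  have hAm : MeasurableSet A := measurableSet_Icc.inter hK.measurableSet
  have hAy : A ⊆ Icc (0:ℝ) y := inter_subset_left
  have hpre : (fun t => (c t, t)) ⁻¹' (Icc 0 x ×ˢ Icc 0 y) = A := by
    ext t
    constructor
    · rintro ⟨⟨-, hcx⟩, ht⟩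
      exact ⟨ht, hIcc ht, hcx⟩
    · rintro ⟨ht, -, hcx⟩
      exact ⟨⟨hc0 t (hIcc ht), hcx⟩, ht⟩
  rw [pieceMeasure, Measure.map_apply_of_aemeasurable (piece_aemeasurable hc)
    (measurableSet_Icc.prod measurableSet_Icc), hpre,
    density_apply hc' hε A hAm (hAy.trans hIcc)]
  congr 1
  have e1 : ∫ t in A, ε * c' t = ∫ t in Icc (0:ℝ) y, A.indicator (fun t => ε * c' t) t := by
    rw [integral_indicator hAm, Measure.restrict_restrict hAm,
      inter_eq_self_of_subset_left hAy]
  have e2 : ∫ t in Icc (0:ℝ) y, A.indicator (fun t => ε * c' t) t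
      = ∫ t in Icc (0:ℝ) y, (if c t ≤ x then ε * c' t else 0) := by
    apply setIntegral_congr_fun measurableSet_Icc
    intro t ht
    have hmem : t ∈ A ↔ c t ≤ x := ⟨fun hm => hm.2.2, fun h => ⟨ht, hIcc ht, h⟩⟩
    show A.indicator (fun t => ε * c' t) t = if c t ≤ x then ε * c' t else 0
    classical
    rw [Set.indicator_apply]
    simp only [hmem]
  have e3 : ∫ t in Icc (0:ℝ) y, (if c t ≤ x then ε * c' t else 0)
      = ∫ t in (0:ℝ)..y, (if c t ≤ x then ε * c' t else 0) := by
    rw [intervalIntegral.integral_of_le hy.1, integral_Icc_eq_integral_Ioc]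
  have e4 : (fun t => if c t ≤ x then ε * c' t else 0)
      = fun t => ε * (if c t ≤ x then c' t else 0) := by
    funext t; split_ifs <;> simp
  rw [e1, e2, e3, e4, intervalIntegral.integral_const_mul, ftc_min hc hc' x y hy]

include hc hc0 hc1 in
lemma piece_compl :
    pieceMeasure c c' ε ((Icc (0:ℝ) 1 ×ˢ Icc (0:ℝ) 1)ᶜ) = 0 := by
  rw [pieceMeasure, Measure.map_apply_of_aemeasurable (piece_aemeasurable hc)
    (measurableSet_Icc.prod measurableSet_Icc).compl]
  have hsub : (fun t => (c t, t)) ⁻¹' (Icc (0:ℝ) 1 ×ˢ Icc (0:ℝ) 1)ᶜ ⊆ (Icc (0:ℝ) 1)ᶜ :=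
    fun t ht htI => ht ⟨⟨hc0 t htI, hc1 t htI⟩, htI⟩
  have hz : ((volume.restrict (Icc (0:ℝ) 1)).withDensity
      fun t => ENNReal.ofReal (ε * c' t)) ((Icc (0:ℝ) 1)ᶜ) = 0 := by
    rw [withDensity_apply _ measurableSet_Icc.compl,
      Measure.restrict_restrict measurableSet_Icc.compl, compl_inter_self,
      Measure.restrict_empty, lintegral_zero_measure]
  exact le_antisymm ((measure_mono hsub).trans hz.le) zero_le

include hc hc' hε hc0 hc1 in
lemma piece_univ :
    pieceMeasure c c' ε univ = ENNReal.ofReal (ε * (c 1 - c 0)) := by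
  have h01 : (0:ℝ) ≤ 1 := zero_le_one
  have := measure_add_measure_compl (μ := pieceMeasure c c' ε)
    ((measurableSet_Icc.prod measurableSet_Icc) :
      MeasurableSet (Icc (0:ℝ) 1 ×ˢ Icc (0:ℝ) 1))
  have h1mem : (1:ℝ) ∈ Icc (0:ℝ) 1 := ⟨zero_le_one, le_rfl⟩
  rw [← this, piece_compl hc hc0 hc1, add_zero,
    piece_rect hc hc' hε hc0 1 1 zero_le_one h1mem]
  congr 2
  have h1 : c 1 ≤ 1 := hc1 1 ⟨zero_le_one, le_rfl⟩
  have h0 : c 0 ≤ 1 := hc1 0 ⟨le_rfl, zero_le_one⟩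
  rw [min_eq_left h1, min_eq_left h0]

include hc hc' hε in
lemma piece_integral (G : ℝ × ℝ → ℝ) (hG : Continuous G) :
    ∫ p, G p ∂(pieceMeasure c c' ε) = ∫ t in Icc (0:ℝ) 1, G (c t, t) * (ε * c' t) := by
  rw [pieceMeasure, integral_map (piece_aemeasurable hc) hG.aestronglyMeasurable]
  have htoNN : AEMeasurable (fun t => Real.toNNReal (ε * c' t))
      (volume.restrict (Icc (0:ℝ) 1)) :=
    ((continuousOn_const.mul hc').aemeasurable measurableSet_Icc).real_toNNReal
  rw [show (fun t => ENNReal.ofReal (ε * c' t))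
      = (fun t => ((Real.toNNReal (ε * c' t) : ℝ≥0) : ℝ≥0∞)) from rfl]
  rw [integral_withDensity_eq_integral_smul₀ htoNN (fun t => G (c t, t))]
  apply setIntegral_congr_fun measurableSet_Icc
  intro t ht
  show (Real.toNNReal (ε * c' t) : ℝ) • G (c t, t) = G (c t, t) * (ε * c' t)
  rw [Real.coe_toNNReal _ (hε t ht), smul_eq_mul, mul_comm]

end Piece

section Uniqueness

lemma measure_eq_of_rect (μ ν : Measure (ℝ × ℝ)) [IsFiniteMeasure μ]
    (hμc : μ ((Icc (0:ℝ) 1 ×ˢ Icc (0:ℝ) 1)ᶜ) = 0)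
    (hνc : ν ((Icc (0:ℝ) 1 ×ˢ Icc (0:ℝ) 1)ᶜ) = 0)
    (huniv : μ univ = ν univ)
    (hrect : ∀ x ∈ Icc (0:ℝ) 1, ∀ y ∈ Icc (0:ℝ) 1,
      μ (Icc 0 x ×ˢ Icc 0 y) = ν (Icc 0 x ×ˢ Icc 0 y)) : μ = ν := by
  have hspan : IsCountablySpanning (range (Iic : ℝ → Set ℝ)) := by
    refine ⟨fun n => Iic (n : ℝ), fun n => mem_range_self _, ?_⟩
    rw [eq_univ_iff_forall]
    intro x
    obtain ⟨n, hn⟩ := exists_nat_ge x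
    exact mem_iUnion.2 ⟨n, hn⟩
  apply MeasureTheory.ext_of_generate_finite
    (image2 (· ×ˢ ·) (range (Iic : ℝ → Set ℝ)) (range (Iic : ℝ → Set ℝ)))
  · have h1 : (Real.measurableSpace) = MeasurableSpace.generateFrom (range Iic) := by
      rw [BorelSpace.measurable_eq (α := ℝ), borel_eq_generateFrom_Iic]
    have h2 := generateFrom_prod_eq hspan hspan
    rw [← h1] at h2
    exact h2
  · rintro _ ⟨_, ⟨a, rfl⟩, _, ⟨b, rfl⟩, rfl⟩ _ ⟨_, ⟨a', rfl⟩, _, ⟨b', rfl⟩, rfl⟩ -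
    rw [prod_inter_prod, Iic_inter_Iic, Iic_inter_Iic]
    exact mem_image2_of_mem (mem_range_self _) (mem_range_self _)
  · rintro _ ⟨_, ⟨a, rfl⟩, _, ⟨b, rfl⟩, rfl⟩
    have key : ∀ ρ : Measure (ℝ × ℝ), ρ ((Icc (0:ℝ) 1 ×ˢ Icc (0:ℝ) 1)ᶜ) = 0 →
        ρ (Iic a ×ˢ Iic b) = ρ ((Iic a ∩ Icc 0 1) ×ˢ (Iic b ∩ Icc 0 1)) := by
      intro ρ hρ
      rw [← prod_inter_prod]
      exact (measure_inter_conull hρ).symm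
    rw [key μ hμc, key ν hνc]
    rcases lt_or_ge a 0 with ha | ha
    · have : Iic a ∩ Icc (0:ℝ) 1 = ∅ := by
        apply eq_empty_of_forall_notMem
        rintro t ⟨h1, h2, -⟩
        exact absurd h2 (not_le.2 (lt_of_le_of_lt h1 ha))
      rw [this, empty_prod, measure_empty, measure_empty]
    rcases lt_or_ge b 0 with hb | hb
    · have : Iic b ∩ Icc (0:ℝ) 1 = ∅ := by
        apply eq_empty_of_forall_notMem
        rintro t ⟨h1, h2, -⟩
        exact absurd h2 (not_le.2 (lt_of_le_of_lt h1 hb))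
      rw [this, prod_empty, measure_empty, measure_empty]
    have ea : Iic a ∩ Icc (0:ℝ) 1 = Icc 0 (min 1 a) := by
      ext t
      simp only [mem_inter_iff, mem_Icc, mem_Iic, le_min_iff]
      tauto
    have eb : Iic b ∩ Icc (0:ℝ) 1 = Icc 0 (min 1 b) := by
      ext t
      simp only [mem_inter_iff, mem_Icc, mem_Iic, le_min_iff]
      tauto
    rw [ea, eb]
    exact hrect _ ⟨le_min zero_le_one ha, min_le_left _ _⟩
      _ ⟨le_min zero_le_one hb, min_le_left _ _⟩
  · exact huniv

end Uniqueness

section Main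

/-- The mid curve. -/
def mc (x₂ : ℝ) (h₁ h₂ : ℝ → ℝ) : ℝ → ℝ := fun t => x₂ - h₂ t + h₁ t

/-- The right curve. -/
def rc (x₂ : ℝ) (h₂ : ℝ → ℝ) : ℝ → ℝ := fun t => x₂ - h₂ t + t

/-- The transport measure associated with an admissible pair. -/
noncomputable def nuMeasure (x₂ : ℝ) (h₁ h₂ h₁' h₂' : ℝ → ℝ) : Measure (ℝ × ℝ) :=
  pieceMeasure h₁ h₁' 1 +
  pieceMeasure (mc x₂ h₁ h₂) (fun t => h₁' t - h₂' t) (-1) +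
  pieceMeasure (rc x₂ h₂) (fun t => 1 - h₂' t) 1

variable {x₁ x₂ : ℝ} {h₁ h₂ h₁' h₂' : ℝ → ℝ}

section Facts

variable (hx₁ : 0 < x₁) (hx₁₂ : x₁ < x₂) (hx₂ : x₂ < 1)
  (hadm : Admissible x₁ x₂ h₁ h₂ h₁' h₂')

include hadm

lemma mono_fact {c c' : ℝ → ℝ}
    (hc : ∀ t ∈ Icc (0:ℝ) 1, HasDerivWithinAt c (c' t) (Icc 0 1) t)
    (hc' : ContinuousOn c' (Icc (0:ℝ) 1))
    (hnn : ∀ t ∈ Icc (0:ℝ) 1, 0 ≤ c' t)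
    {a b : ℝ} (ha : 0 ≤ a) (hab : a ≤ b) (hb : b ≤ 1) : c a ≤ c b := by
  have h := ftc_plain hc hc' a b ha hab hb
  have h2 : (0:ℝ) ≤ ∫ t in a..b, c' t := intervalIntegral.integral_nonneg hab
    (fun u hu => hnn u ⟨ha.trans hu.1, hu.2.trans hb⟩)
  linarith

lemma hd_mc : ∀ t ∈ Icc (0:ℝ) 1,
    HasDerivWithinAt (mc x₂ h₁ h₂) (h₁' t - h₂' t) (Icc 0 1) t := by
  intro t ht
  have := ((hasDerivWithinAt_const t (Icc (0:ℝ) 1) x₂).sub (hadm.2.1 t ht)).add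
    (hadm.1 t ht)
  exact this.congr_deriv (by ring)

lemma hd_rc : ∀ t ∈ Icc (0:ℝ) 1,
    HasDerivWithinAt (rc x₂ h₂) (1 - h₂' t) (Icc 0 1) t := by
  intro t ht
  have := ((hasDerivWithinAt_const t (Icc (0:ℝ) 1) x₂).sub (hadm.2.1 t ht)).add
    (hasDerivWithinAt_id t (Icc (0:ℝ) 1))
  exact this.congr_deriv (by ring)

lemma cont_mc' : ContinuousOn (fun t => h₁' t - h₂' t) (Icc (0:ℝ) 1) :=
  hadm.2.2.1.sub hadm.2.2.2.1

lemma cont_rc' : ContinuousOn (fun t => 1 - h₂' t) (Icc (0:ℝ) 1) :=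
  continuousOn_const.sub hadm.2.2.2.1

lemma fact_h1_nonneg : ∀ y ∈ Icc (0:ℝ) 1, 0 ≤ h₁ y := by
  intro y hy
  have := mono_fact hadm hadm.1 hadm.2.2.1 (fun t ht => (hadm.2.2.2.2.2.2.2.2 t ht).1)
    le_rfl hy.1 hy.2
  rw [hadm.2.2.2.2.1] at this
  exact this

lemma fact_h1_le : ∀ y ∈ Icc (0:ℝ) 1, h₁ y ≤ x₁ := by
  intro y hy
  have := mono_fact hadm hadm.1 hadm.2.2.1 (fun t ht => (hadm.2.2.2.2.2.2.2.2 t ht).1)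
    hy.1 hy.2 le_rfl
  rw [hadm.2.2.2.2.2.2.1] at this
  exact this

lemma fact_mc_ge : ∀ y ∈ Icc (0:ℝ) 1, x₁ ≤ mc x₂ h₁ h₂ y := by
  intro y hy
  have hneg : ∀ t ∈ Icc (0:ℝ) 1, HasDerivWithinAt (fun u => -(mc x₂ h₁ h₂ u))
      (-(h₁' t - h₂' t)) (Icc 0 1) t := fun t ht => (hd_mc hadm t ht).neg
  have := mono_fact hadm hneg (cont_mc' hadm).neg
    (fun t ht => by
      have := (hadm.2.2.2.2.2.2.2.2 t ht).2.1
      linarith) hy.1 hy.2 le_rfl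
  have e : mc x₂ h₁ h₂ 1 = x₁ := by
    simp [mc, hadm.2.2.2.2.2.2.2.1, hadm.2.2.2.2.2.2.1]
  simp only [neg_le_neg_iff] at this
  rw [e] at this
  exact this

lemma fact_mc_le : ∀ y ∈ Icc (0:ℝ) 1, mc x₂ h₁ h₂ y ≤ x₂ := by
  intro y hy
  have hneg : ∀ t ∈ Icc (0:ℝ) 1, HasDerivWithinAt (fun u => -(mc x₂ h₁ h₂ u))
      (-(h₁' t - h₂' t)) (Icc 0 1) t := fun t ht => (hd_mc hadm t ht).neg
  have := mono_fact hadm hneg (cont_mc' hadm).neg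
    (fun t ht => by
      have := (hadm.2.2.2.2.2.2.2.2 t ht).2.1
      linarith) le_rfl hy.1 hy.2
  have e : mc x₂ h₁ h₂ 0 = x₂ := by
    simp [mc, hadm.2.2.2.2.1, hadm.2.2.2.2.2.1]
  simp only [neg_le_neg_iff] at this
  rw [e] at this
  exact this

lemma fact_rc_ge : ∀ y ∈ Icc (0:ℝ) 1, x₂ ≤ rc x₂ h₂ y := by
  intro y hy
  have := mono_fact hadm (hd_rc hadm) (cont_rc' hadm)
    (fun t ht => by
      have := (hadm.2.2.2.2.2.2.2.2 t ht).2.2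
      linarith) le_rfl hy.1 hy.2
  have e : rc x₂ h₂ 0 = x₂ := by simp [rc, hadm.2.2.2.2.2.1]
  rw [e] at this
  exact this

lemma fact_rc_le : ∀ y ∈ Icc (0:ℝ) 1, rc x₂ h₂ y ≤ 1 := by
  intro y hy
  have := mono_fact hadm (hd_rc hadm) (cont_rc' hadm)
    (fun t ht => by
      have := (hadm.2.2.2.2.2.2.2.2 t ht).2.2
      linarith) hy.1 hy.2 le_rfl
  have e : rc x₂ h₂ 1 = 1 := by simp [rc, hadm.2.2.2.2.2.2.2.1]
  rw [e] at this
  exact this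

end Facts

section NuMu

variable (hx₁ : 0 < x₁) (hx₁₂ : x₁ < x₂) (hx₂ : x₂ < 1)
  (hadm : Admissible x₁ x₂ h₁ h₂ h₁' h₂')

include hx₁ hx₁₂ hx₂ hadm

lemma nu_rect (x y : ℝ) (hx : x ∈ Icc (0:ℝ) 1) (hy : y ∈ Icc (0:ℝ) 1) :
    nuMeasure x₂ h₁ h₂ h₁' h₂' (Icc 0 x ×ˢ Icc 0 y)
      = ENNReal.ofReal
          (min (h₁ y) x - min (mc x₂ h₁ h₂ y) x + min (rc x₂ h₂ y) x) := by
  have hIneq := hadm.2.2.2.2.2.2.2.2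
  have P1 := piece_rect (ε := 1) hadm.1 hadm.2.2.1
    (fun t ht => by have := (hIneq t ht).1; linarith)
    (fact_h1_nonneg hadm) x y hx.1 hy
  have P2 := piece_rect (ε := -1) (hd_mc hadm) (cont_mc' hadm)
    (fun t ht => by have := (hIneq t ht).2.1; nlinarith)
    (fun t ht => hx₁.le.trans (fact_mc_ge hadm t ht)) x y hx.1 hy
  have P3 := piece_rect (ε := 1) (hd_rc hadm) (cont_rc' hadm)
    (fun t ht => by have := (hIneq t ht).2.2; linarith)
    (fun t ht => (hx₁.le.trans hx₁₂.le).trans (fact_rc_ge hadm t ht)) x y hx.1 hy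
  have e10 : h₁ 0 = 0 := hadm.2.2.2.2.1
  have emc0 : mc x₂ h₁ h₂ 0 = x₂ := by
    simp [mc, hadm.2.2.2.2.1, hadm.2.2.2.2.2.1]
  have erc0 : rc x₂ h₂ 0 = x₂ := by simp [rc, hadm.2.2.2.2.2.1]
  rw [e10] at P1
  rw [emc0] at P2
  rw [erc0] at P3
  have E1 : (1:ℝ) * (min (h₁ y) x - min 0 x) = min (h₁ y) x := by
    rw [min_eq_left hx.1]; ring
  have E2 : (-1:ℝ) * (min (mc x₂ h₁ h₂ y) x - min x₂ x)
      = min x₂ x - min (mc x₂ h₁ h₂ y) x := by ring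
  have E3 : (1:ℝ) * (min (rc x₂ h₂ y) x - min x₂ x)
      = min (rc x₂ h₂ y) x - min x₂ x := by ring
  rw [E1] at P1
  rw [E2] at P2
  rw [E3] at P3
  have hA : (0:ℝ) ≤ min (h₁ y) x := le_min (fact_h1_nonneg hadm y hy) hx.1
  have hB : (0:ℝ) ≤ min x₂ x - min (mc x₂ h₁ h₂ y) x :=
    sub_nonneg.2 (min_le_min (fact_mc_le hadm y hy) le_rfl)
  have hC : (0:ℝ) ≤ min (rc x₂ h₂ y) x - min x₂ x :=
    sub_nonneg.2 (min_le_min (fact_rc_ge hadm y hy) le_rfl)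
  show (pieceMeasure h₁ h₁' 1 +
      pieceMeasure (mc x₂ h₁ h₂) (fun t => h₁' t - h₂' t) (-1) +
      pieceMeasure (rc x₂ h₂) (fun t => 1 - h₂' t) 1) (Icc 0 x ×ˢ Icc 0 y) = _
  rw [Measure.add_apply, Measure.add_apply, P1, P2, P3,
    ← ENNReal.ofReal_add hA hB, ← ENNReal.ofReal_add (by linarith) hC]
  congr 1
  ring

lemma nu_compl :
    nuMeasure x₂ h₁ h₂ h₁' h₂' ((Icc (0:ℝ) 1 ×ˢ Icc (0:ℝ) 1)ᶜ) = 0 := by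
  have hIneq := hadm.2.2.2.2.2.2.2.2
  have P1 := piece_compl (ε := 1) (c' := h₁') hadm.1 (fact_h1_nonneg hadm)
    (fun t ht => (fact_h1_le hadm t ht).trans (hx₁₂.trans hx₂).le)
  have P2 := piece_compl (ε := -1) (c' := fun t => h₁' t - h₂' t) (hd_mc hadm)
    (fun t ht => hx₁.le.trans (fact_mc_ge hadm t ht))
    (fun t ht => (fact_mc_le hadm t ht).trans hx₂.le)
  have P3 := piece_compl (ε := 1) (c' := fun t => 1 - h₂' t) (hd_rc hadm)
    (fun t ht => ((hx₁.trans hx₁₂).le).trans (fact_rc_ge hadm t ht))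
    (fact_rc_le hadm)
  show (pieceMeasure h₁ h₁' 1 +
      pieceMeasure (mc x₂ h₁ h₂) (fun t => h₁' t - h₂' t) (-1) +
      pieceMeasure (rc x₂ h₂) (fun t => 1 - h₂' t) 1) _ = 0
  rw [Measure.add_apply, Measure.add_apply, P1, P2, P3]
  simp

lemma nu_univ : nuMeasure x₂ h₁ h₂ h₁' h₂' univ = 1 := by
  have hIneq := hadm.2.2.2.2.2.2.2.2
  have P1 := piece_univ (ε := 1) hadm.1 hadm.2.2.1
    (fun t ht => by have := (hIneq t ht).1; linarith)
    (fact_h1_nonneg hadm)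
    (fun t ht => (fact_h1_le hadm t ht).trans (hx₁₂.trans hx₂).le)
  have P2 := piece_univ (ε := -1) (hd_mc hadm) (cont_mc' hadm)
    (fun t ht => by have := (hIneq t ht).2.1; nlinarith)
    (fun t ht => hx₁.le.trans (fact_mc_ge hadm t ht))
    (fun t ht => (fact_mc_le hadm t ht).trans hx₂.le)
  have P3 := piece_univ (ε := 1) (hd_rc hadm) (cont_rc' hadm)
    (fun t ht => by have := (hIneq t ht).2.2; linarith)
    (fun t ht => ((hx₁.trans hx₁₂).le).trans (fact_rc_ge hadm t ht))
    (fact_rc_le hadm)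
  have e1 : (1:ℝ) * (h₁ 1 - h₁ 0) = x₁ := by
    rw [hadm.2.2.2.2.2.2.1, hadm.2.2.2.2.1]; ring
  have e2 : (-1:ℝ) * (mc x₂ h₁ h₂ 1 - mc x₂ h₁ h₂ 0) = x₂ - x₁ := by
    simp only [mc, hadm.2.2.2.2.2.2.1, hadm.2.2.2.2.2.2.2.1,
      hadm.2.2.2.2.1, hadm.2.2.2.2.2.1]
    ring
  have e3 : (1:ℝ) * (rc x₂ h₂ 1 - rc x₂ h₂ 0) = 1 - x₂ := by
    simp only [rc, hadm.2.2.2.2.2.2.2.1, hadm.2.2.2.2.2.1]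
    ring
  rw [e1] at P1
  rw [e2] at P2
  rw [e3] at P3
  show (pieceMeasure h₁ h₁' 1 +
      pieceMeasure (mc x₂ h₁ h₂) (fun t => h₁' t - h₂' t) (-1) +
      pieceMeasure (rc x₂ h₂) (fun t => 1 - h₂' t) 1) univ = 1
  rw [Measure.add_apply, Measure.add_apply, P1, P2, P3,
    ← ENNReal.ofReal_add hx₁.le (by linarith),
    ← ENNReal.ofReal_add (by linarith) (by linarith)]
  norm_num

lemma mu_rect (μ : Measure (ℝ × ℝ)) [IsFiniteMeasure μ]
    (hdf : HasPiecewiseDF x₁ x₂ h₁ h₂ μ)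
    (x y : ℝ) (hx : x ∈ Icc (0:ℝ) 1) (hy : y ∈ Icc (0:ℝ) 1) :
    μ (Icc 0 x ×ˢ Icc 0 y)
      = ENNReal.ofReal
          (min (h₁ y) x - min (mc x₂ h₁ h₂ y) x + min (rc x₂ h₂ y) x) := by
  have hfin : μ (Icc 0 x ×ˢ Icc 0 y) ≠ ⊤ := measure_ne_top μ _
  obtain ⟨B1, B2, B3⟩ := hdf x hx y hy
  have hb10 := fact_h1_nonneg hadm y hy
  have hb11 := fact_h1_le hadm y hy
  have hmcl := fact_mc_ge hadm y hy
  have hmcu := fact_mc_le hadm y hy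
  have hrcl := fact_rc_ge hadm y hy
  have hrcu := fact_rc_le hadm y hy
  have hmc : mc x₂ h₁ h₂ y = x₂ - h₂ y + h₁ y := rfl
  have hrc : rc x₂ h₂ y = x₂ - h₂ y + y := rfl
  rcases le_total x x₁ with hcase | hcase
  · rw [← ENNReal.ofReal_toReal hfin, B1 ⟨hx.1, hcase⟩]
    congr 1
    rw [min_eq_right (hcase.trans hmcl), min_eq_right (hcase.trans (hx₁₂.le.trans hrcl)),
      min_comm]
    ring
  · rcases le_total x x₂ with hcase2 | hcase2
    · rw [← ENNReal.ofReal_toReal hfin, B2 ⟨hcase, hcase2⟩]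
      congr 1
      rw [min_eq_left (hb11.trans hcase), min_eq_right (hcase2.trans hrcl)]
      rcases le_total (mc x₂ h₁ h₂ y) x with h | h
      · rw [min_eq_left h, max_eq_left (by rw [hmc] at h; linarith)]
        rw [hmc]; ring
      · rw [min_eq_right h, max_eq_right (by rw [hmc] at h; linarith)]
        ring
    · rw [← ENNReal.ofReal_toReal hfin, B3 ⟨hcase2, hx.2⟩]
      congr 1
      rw [min_eq_left (hb11.trans (hx₁₂.le.trans hcase2)),
        min_eq_left (hmcu.trans hcase2)]
      rcases le_total (rc x₂ h₂ y) x with h | h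
      · rw [min_eq_left h, min_eq_right (by rw [hrc] at h; linarith), hmc, hrc]
        ring
      · rw [min_eq_right h, min_eq_left (by rw [hrc] at h; linarith), hmc]
        ring

lemma key_eq (F : ℝ × ℝ → ℝ)
    (hFcont : ContinuousOn F (Icc (0:ℝ) 1 ×ˢ Icc (0:ℝ) 1))
    (μ : Measure (ℝ × ℝ)) (hμ : IsDoublyStochastic μ)
    (hdf : HasPiecewiseDF x₁ x₂ h₁ h₂ μ) :
    ∫ p, F p ∂μ = Gfun F x₂ h₁ h₂ h₁' h₂' := by
  haveI hprob : IsProbabilityMeasure μ := hμ.1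
  have hIneq := hadm.2.2.2.2.2.2.2.2
  have hε1 : ∀ t ∈ Icc (0:ℝ) 1, 0 ≤ 1 * h₁' t := fun t ht => by
    have := (hIneq t ht).1; linarith
  have hε2 : ∀ t ∈ Icc (0:ℝ) 1, 0 ≤ -1 * (h₁' t - h₂' t) := fun t ht => by
    have := (hIneq t ht).2.1; nlinarith
  have hε3 : ∀ t ∈ Icc (0:ℝ) 1, 0 ≤ 1 * (1 - h₂' t) := fun t ht => by
    have := (hIneq t ht).2.2; linarith
  have hc1u : ∀ t ∈ Icc (0:ℝ) 1, h₁ t ≤ 1 :=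
    fun t ht => (fact_h1_le hadm t ht).trans (hx₁₂.trans hx₂).le
  have hc2l : ∀ t ∈ Icc (0:ℝ) 1, 0 ≤ mc x₂ h₁ h₂ t :=
    fun t ht => hx₁.le.trans (fact_mc_ge hadm t ht)
  have hc2u : ∀ t ∈ Icc (0:ℝ) 1, mc x₂ h₁ h₂ t ≤ 1 :=
    fun t ht => (fact_mc_le hadm t ht).trans hx₂.le
  have hc3l : ∀ t ∈ Icc (0:ℝ) 1, 0 ≤ rc x₂ h₂ t :=
    fun t ht => ((hx₁.trans hx₁₂).le).trans (fact_rc_ge hadm t ht)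
  have hsq : μ (Icc (0:ℝ) 1 ×ˢ Icc (0:ℝ) 1) = 1 := by
    rw [hμ.2.2 (Icc 0 1) measurableSet_Icc subset_rfl, Real.volume_Icc]
    norm_num
  have hμc : μ ((Icc (0:ℝ) 1 ×ˢ Icc (0:ℝ) 1)ᶜ) = 0 := by
    have h := measure_add_measure_compl
      (μ := μ) (s := Icc (0:ℝ) 1 ×ˢ Icc (0:ℝ) 1)
      (measurableSet_Icc.prod measurableSet_Icc)
    rw [hsq, measure_univ] at h
    have h' : (1:ℝ≥0∞) + μ ((Icc (0:ℝ) 1 ×ˢ Icc (0:ℝ) 1)ᶜ) = 1 + 0 := by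
      rw [add_zero]; exact h
    exact (ENNReal.add_right_inj ENNReal.one_ne_top).1 h'
  have hμeq : μ = nuMeasure x₂ h₁ h₂ h₁' h₂' := by
    apply measure_eq_of_rect μ _ hμc (nu_compl hx₁ hx₁₂ hx₂ hadm)
    · rw [measure_univ, nu_univ hx₁ hx₁₂ hx₂ hadm]
    · intro x hx y hy
      rw [mu_rect hx₁ hx₁₂ hx₂ hadm μ hdf x y hx hy,
        nu_rect hx₁ hx₁₂ hx₂ hadm x y hx hy]
  set Ft : ℝ × ℝ → ℝ := fun p => F (max 0 (min p.1 1), max 0 (min p.2 1)) with hFt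
  have hproj : ∀ p : ℝ × ℝ, (max 0 (min p.1 1), max 0 (min p.2 1))
      ∈ Icc (0:ℝ) 1 ×ˢ Icc (0:ℝ) 1 := fun p =>
    ⟨⟨le_max_left _ _, max_le zero_le_one (min_le_right _ _)⟩,
     ⟨le_max_left _ _, max_le zero_le_one (min_le_right _ _)⟩⟩
  have hFtcont : Continuous Ft := by
    apply hFcont.comp_continuous ?_ hproj
    fun_prop
  have hFteq : ∀ p ∈ Icc (0:ℝ) 1 ×ˢ Icc (0:ℝ) 1, F p = Ft p := by
    rintro ⟨a, b⟩ ⟨⟨ha0, ha1⟩, hb0, hb1⟩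
    simp only [hFt]
    rw [min_eq_left ha1, max_eq_right ha0, min_eq_left hb1, max_eq_right hb0]
  have hae : F =ᵐ[μ] Ft := by
    have hsub : {p : ℝ × ℝ | ¬F p = Ft p} ⊆ (Icc (0:ℝ) 1 ×ˢ Icc (0:ℝ) 1)ᶜ :=
      fun p hp hps => hp (hFteq p hps)
    exact (MeasureTheory.ae_iff).2 (measure_mono_null hsub hμc)
  obtain ⟨M, hM⟩ := (isCompact_Icc.prod isCompact_Icc).exists_bound_of_continuousOn hFcont
  rw [integral_congr_ae hae, hμeq]
  have hfin1 : IsFiniteMeasure (pieceMeasure h₁ h₁' 1) := ⟨by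
    rw [piece_univ hadm.1 hadm.2.2.1 hε1 (fact_h1_nonneg hadm) hc1u]
    exact ENNReal.ofReal_lt_top⟩
  have hfin2 : IsFiniteMeasure
      (pieceMeasure (mc x₂ h₁ h₂) (fun t => h₁' t - h₂' t) (-1)) := ⟨by
    rw [piece_univ (hd_mc hadm) (cont_mc' hadm) hε2 hc2l hc2u]
    exact ENNReal.ofReal_lt_top⟩
  have hfin3 : IsFiniteMeasure
      (pieceMeasure (rc x₂ h₂) (fun t => 1 - h₂' t) 1) := ⟨by
    rw [piece_univ (hd_rc hadm) (cont_rc' hadm) hε3 hc3l (fact_rc_le hadm)]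
    exact ENNReal.ofReal_lt_top⟩
  have hintpiece : ∀ P : Measure (ℝ × ℝ), IsFiniteMeasure P → Integrable Ft P := by
    intro P hP
    haveI := hP
    apply Integrable.mono' (integrable_const M) hFtcont.aestronglyMeasurable
    filter_upwards with p
    exact hM _ (hproj p)
  have hdecomp : nuMeasure x₂ h₁ h₂ h₁' h₂' = pieceMeasure h₁ h₁' 1 +
      pieceMeasure (mc x₂ h₁ h₂) (fun t => h₁' t - h₂' t) (-1) +
      pieceMeasure (rc x₂ h₂) (fun t => 1 - h₂' t) 1 := rfl
  rw [hdecomp,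
    integral_add_measure (Integrable.add_measure (hintpiece _ hfin1) (hintpiece _ hfin2))
      (hintpiece _ hfin3),
    integral_add_measure (hintpiece _ hfin1) (hintpiece _ hfin2),
    piece_integral hadm.1 hadm.2.2.1 hε1 Ft hFtcont,
    piece_integral (hd_mc hadm) (cont_mc' hadm) hε2 Ft hFtcont,
    piece_integral (hd_rc hadm) (cont_rc' hadm) hε3 Ft hFtcont,
    Gfun, intervalIntegral.integral_of_le zero_le_one, ← integral_Icc_eq_integral_Ioc]
  have hcont1 : ContinuousOn (fun t => Ft (h₁ t, t) * (1 * h₁' t)) (Icc (0:ℝ) 1) :=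
    (hFtcont.comp_continuousOn ((ccont hadm.1).prodMk continuousOn_id)).mul
      (continuousOn_const.mul hadm.2.2.1)
  have hcont2 : ContinuousOn
      (fun t => Ft (mc x₂ h₁ h₂ t, t) * (-1 * (h₁' t - h₂' t))) (Icc (0:ℝ) 1) :=
    (hFtcont.comp_continuousOn ((ccont (hd_mc hadm)).prodMk continuousOn_id)).mul
      (continuousOn_const.mul (cont_mc' hadm))
  have hcont3 : ContinuousOn
      (fun t => Ft (rc x₂ h₂ t, t) * (1 * (1 - h₂' t))) (Icc (0:ℝ) 1) :=
    (hFtcont.comp_continuousOn ((ccont (hd_rc hadm)).prodMk continuousOn_id)).mul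
      (continuousOn_const.mul (cont_rc' hadm))
  have hsum : ∫ t in Icc (0:ℝ) 1,
      (F (h₁ t, t) * h₁' t + F (x₂ - h₂ t + h₁ t, t) * (h₂' t - h₁' t) +
        F (x₂ - h₂ t + t, t) * (1 - h₂' t))
      = ∫ t in Icc (0:ℝ) 1,
          (Ft (h₁ t, t) * (1 * h₁' t) +
           (Ft (mc x₂ h₁ h₂ t, t) * (-1 * (h₁' t - h₂' t)) +
            Ft (rc x₂ h₂ t, t) * (1 * (1 - h₂' t)))) := by
    apply setIntegral_congr_fun measurableSet_Icc
    intro t ht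
    have m1 : (h₁ t, t) ∈ Icc (0:ℝ) 1 ×ˢ Icc (0:ℝ) 1 :=
      ⟨⟨fact_h1_nonneg hadm t ht, hc1u t ht⟩, ht⟩
    have m2 : (mc x₂ h₁ h₂ t, t) ∈ Icc (0:ℝ) 1 ×ˢ Icc (0:ℝ) 1 :=
      ⟨⟨hc2l t ht, hc2u t ht⟩, ht⟩
    have m3 : (rc x₂ h₂ t, t) ∈ Icc (0:ℝ) 1 ×ˢ Icc (0:ℝ) 1 :=
      ⟨⟨hc3l t ht, fact_rc_le hadm t ht⟩, ht⟩
    show F (h₁ t, t) * h₁' t + F (x₂ - h₂ t + h₁ t, t) * (h₂' t - h₁' t) +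
        F (x₂ - h₂ t + t, t) * (1 - h₂' t)
      = Ft (h₁ t, t) * (1 * h₁' t) +
        (Ft (mc x₂ h₁ h₂ t, t) * (-1 * (h₁' t - h₂' t)) +
         Ft (rc x₂ h₂ t, t) * (1 * (1 - h₂' t)))
    rw [← hFteq _ m1, ← hFteq _ m2, ← hFteq _ m3]
    show F (h₁ t, t) * h₁' t + F (x₂ - h₂ t + h₁ t, t) * (h₂' t - h₁' t) +
        F (x₂ - h₂ t + t, t) * (1 - h₂' t)
      = F (h₁ t, t) * (1 * h₁' t) +
        (F (x₂ - h₂ t + h₁ t, t) * (-1 * (h₁' t - h₂' t)) +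
         F (x₂ - h₂ t + t, t) * (1 * (1 - h₂' t)))
    ring
  have i1 : IntegrableOn (fun t => Ft (h₁ t, t) * (1 * h₁' t)) (Icc (0:ℝ) 1) volume :=
    hcont1.integrableOn_compact isCompact_Icc
  have i2 : IntegrableOn (fun t => Ft (mc x₂ h₁ h₂ t, t) * (-1 * (h₁' t - h₂' t)))
      (Icc (0:ℝ) 1) volume := hcont2.integrableOn_compact isCompact_Icc
  have i3 : IntegrableOn (fun t => Ft (rc x₂ h₂ t, t) * (1 * (1 - h₂' t)))
      (Icc (0:ℝ) 1) volume := hcont3.integrableOn_compact isCompact_Icc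
  have i23 : IntegrableOn (fun t => Ft (mc x₂ h₁ h₂ t, t) * (-1 * (h₁' t - h₂' t)) +
      Ft (rc x₂ h₂ t, t) * (1 * (1 - h₂' t))) (Icc (0:ℝ) 1) volume := i2.add i3
  rw [hsum, integral_add i1 i23, integral_add i2 i3]
  ring

end NuMu

end Main

theorem stmt8 (x₁ x₂ : ℝ) (hx₁ : 0 < x₁) (hx₁₂ : x₁ < x₂) (hx₂ : x₂ < 1)
    (F : ℝ × ℝ → ℝ) (hFcont : ContinuousOn F (Icc (0:ℝ) 1 ×ˢ Icc (0:ℝ) 1))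
    (h₁s h₂s h₁s' h₂s' : ℝ → ℝ)
    (hstar : Admissible x₁ x₂ h₁s h₂s h₁s' h₂s')
    (hmax : ∀ h₁ h₂ h₁' h₂' : ℝ → ℝ, Admissible x₁ x₂ h₁ h₂ h₁' h₂' →
      Gfun F x₂ h₁ h₂ h₁' h₂' ≤ Gfun F x₂ h₁s h₂s h₁s' h₂s')
    (μs : Measure (ℝ × ℝ)) (hμs : IsDoublyStochastic μs)
    (hμsdf : HasPiecewiseDF x₁ x₂ h₁s h₂s μs) :
    (∀ h₁ h₂ h₁' h₂' : ℝ → ℝ, Admissible x₁ x₂ h₁ h₂ h₁' h₂' →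
      ∀ μ : Measure (ℝ × ℝ), IsDoublyStochastic μ → HasPiecewiseDF x₁ x₂ h₁ h₂ μ →
        ∫ p, F p ∂μ ≤ ∫ p, F p ∂μs) ∧
    ∫ p, F p ∂μs = Gfun F x₂ h₁s h₂s h₁s' h₂s' := by
  constructor
  · intro h₁ h₂ h₁' h₂' hadm μ hμ hdf
    rw [key_eq hx₁ hx₁₂ hx₂ hadm F hFcont μ hμ hdf,
      key_eq hx₁ hx₁₂ hx₂ hstar F hFcont μs hμs hμsdf]
    exact hmax _ _ _ _ hadm
  · exact key_eq hx₁ hx₁₂ hx₂ hstar F hFcont μs hμs hμsdf
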